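/- For each η ∈ (0,1), define ψ_η(x) = (2/ln(η⁻¹)) ∫_0^{|x|} (∫_0^y (1/z)·χ_{[η, η^{1/2}]}(z) dz) dy. Then for all x ∈ ℝ, |x| ≤ ψ_η(x) + √η. -/

import Mathlib

open MeasureTheory intervalIntegral

/-- For `η ∈ (0,1)` and `ψ_η(x) = (2/ln η⁻¹) ∫_0^{|x|} ∫_0^y (1/z)·χ_[η,√η](z) dz dy`,
we have `|x| ≤ ψ_η(x) + √η` for all `x`. -/
theorem stmt1 (η : ℝ) (hη0 : 0 < η) (hη1 : η < 1)
    (ψ : ℝ → ℝ)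
    (hψ : ∀ x : ℝ, ψ x = (2 / Real.log η⁻¹) *
      ∫ y in (0:ℝ)..|x|, ∫ z in (0:ℝ)..y,
        (1 / z) * Set.indicator (Set.Icc η (Real.sqrt η)) (fun _ => (1:ℝ)) z) :
    ∀ x : ℝ, |x| ≤ ψ x + Real.sqrt η := by
  set s := Real.sqrt η with hs
  have hs0 : 0 < s := Real.sqrt_pos.2 hη0
  have hηs : η < s := by
    have h1 : Real.sqrt (η ^ 2) < Real.sqrt η := by
      apply Real.sqrt_lt_sqrt (sq_nonneg η)
      nlinarith
    rwa [Real.sqrt_sq hη0.le] at h1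
  set L := Real.log η⁻¹ with hLdef
  have hL : 0 < L := Real.log_pos (by rw [one_lt_inv_iff₀]; exact ⟨hη0, hη1⟩)
  set F := fun z : ℝ => (1 / z) * Set.indicator (Set.Icc η s) (fun _ => (1:ℝ)) z with hFdef
  have hFeq : F = Set.indicator (Set.Icc η s) (fun z => 1 / z) := by
    funext z
    by_cases h : z ∈ Set.Icc η s <;>
      simp [hFdef, Set.indicator_of_mem, Set.indicator_of_notMem, h]
  have hFnn : ∀ z, 0 ≤ F z := by
    intro z
    rw [hFeq]
    by_cases h : z ∈ Set.Icc η s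
    · rw [Set.indicator_of_mem h]
      exact div_nonneg one_pos.le (hη0.le.trans h.1)
    · rw [Set.indicator_of_notMem h]
  have hFint : ∀ a b : ℝ, IntervalIntegrable F volume a b := by
    intro a b
    rw [hFeq]
    apply MeasureTheory.Integrable.intervalIntegrable
    rw [MeasureTheory.integrable_indicator_iff measurableSet_Icc]
    apply ContinuousOn.integrableOn_Icc
    apply ContinuousOn.div continuousOn_const continuousOn_id
    intro z hz
    exact ne_of_gt (lt_of_lt_of_le hη0 hz.1)
  set G := fun y : ℝ => ∫ z in (0:ℝ)..y, F z with hGdef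
  have hGcont : Continuous G := intervalIntegral.continuous_primitive (fun a b => hFint a b) 0
  have hGint : ∀ a b : ℝ, IntervalIntegrable G volume a b :=
    fun a b => hGcont.intervalIntegrable a b
  have hGnn : ∀ y, 0 ≤ y → 0 ≤ G y := by
    intro y hy
    exact intervalIntegral.integral_nonneg hy fun u _ => hFnn u
  have hmid : (∫ z in η..s, F z) = L / 2 := by
    have h1 : (∫ z in η..s, F z) = ∫ z in η..s, 1 / z := by
      apply intervalIntegral.integral_congr
      intro z hz
      rw [Set.uIcc_of_le hηs.le] at hz
      rw [hFeq, Set.indicator_of_mem hz]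
    rw [h1, integral_one_div (by
      intro h0
      rw [Set.uIcc_of_le hηs.le] at h0
      exact absurd h0.1 (not_le.2 hη0))]
    have hlogs : Real.log s = Real.log η / 2 := Real.log_sqrt hη0.le
    rw [Real.log_div (ne_of_gt hs0) (ne_of_gt hη0), hlogs, hLdef, Real.log_inv]
    ring
  have hGlow : ∀ y, s ≤ y → L / 2 ≤ G y := by
    intro y hy
    have hsplit1 : (∫ z in (0:ℝ)..η, F z) + (∫ z in η..y, F z) = G y :=
      intervalIntegral.integral_add_adjacent_intervals (hFint 0 η) (hFint η y)
    have hsplit2 : (∫ z in η..s, F z) + (∫ z in s..y, F z) = ∫ z in η..y, F z :=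
      intervalIntegral.integral_add_adjacent_intervals (hFint η s) (hFint s y)
    have h1 : 0 ≤ ∫ z in (0:ℝ)..η, F z :=
      intervalIntegral.integral_nonneg hη0.le fun u _ => hFnn u
    have h2 : 0 ≤ ∫ z in s..y, F z :=
      intervalIntegral.integral_nonneg hy fun u _ => hFnn u
    linarith [hmid]
  intro x
  rw [hψ x]
  set r := |x| with hr
  have hr0 : 0 ≤ r := abs_nonneg x
  by_cases hrs : r ≤ s
  · have h1 : 0 ≤ ∫ y in (0:ℝ)..r, G y :=
      intervalIntegral.integral_nonneg hr0 fun u hu => hGnn u hu.1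
    have h2 : 0 ≤ (2 / L) * ∫ y in (0:ℝ)..r, G y := by positivity
    linarith
  · push_neg at hrs
    have hsplit : (∫ y in (0:ℝ)..s, G y) + (∫ y in s..r, G y) = ∫ y in (0:ℝ)..r, G y :=
      intervalIntegral.integral_add_adjacent_intervals (hGint 0 s) (hGint s r)
    have h1 : 0 ≤ ∫ y in (0:ℝ)..s, G y :=
      intervalIntegral.integral_nonneg hs0.le fun u hu => hGnn u hu.1
    have h2 : (∫ y in s..r, (fun _ : ℝ => L / 2) y) ≤ ∫ y in s..r, G y := by
      apply intervalIntegral.integral_mono_on hrs.le (intervalIntegrable_const) (hGint s r)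
      intro u hu
      exact hGlow u hu.1
    rw [intervalIntegral.integral_const, smul_eq_mul] at h2
    have h3 : (r - s) * (L / 2) ≤ ∫ y in (0:ℝ)..r, G y := by linarith
    have h4 : r - s ≤ (2 / L) * ∫ y in (0:ℝ)..r, G y := by
      have := mul_le_mul_of_nonneg_left h3 (le_of_lt (div_pos two_pos hL))
      calc r - s = (2 / L) * ((r - s) * (L / 2)) := by field_simp
        _ ≤ (2 / L) * ∫ y in (0:ℝ)..r, G y := this
    linarith
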